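/- For all n ≥ 1 and k ≥ 1, the coefficient of t^k in F_n(s,t) = Σ_{σ∈𝒟_n} (−1)^{inv(σ)} s^{exc(σ)} t^{depth(σ)} equals (−1)^k binom(k−1, n−k−1) s^{n−k} (1+s)^{2k−n} when k+1 ≤ n ≤ 2k, and 0 otherwise. -/

import Mathlib

/-- Number of excedances of a permutation. -/
def excN {n : ℕ} (σ : Equiv.Perm (Fin n)) : ℕ :=
  (Finset.univ.filter fun i : Fin n => i < σ i).card

/-- Depth of a permutation: `∑_{i : σ i > i} (σ i - i)`. -/
def depthN {n : ℕ} (σ : Equiv.Perm (Fin n)) : ℕ :=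
  ∑ i ∈ Finset.univ.filter (fun i : Fin n => i < σ i), ((σ i : ℕ) - (i : ℕ))

/-- Number of inversions of a permutation. -/
def invN {n : ℕ} (σ : Equiv.Perm (Fin n)) : ℕ :=
  (Finset.univ.filter fun p : Fin n × Fin n => p.1 < p.2 ∧ σ p.2 < σ p.1).card

/-- The set of derangements of `Fin n`. -/
def derangementsFin (n : ℕ) : Finset (Equiv.Perm (Fin n)) :=
  Finset.univ.filter fun σ => ∀ i, σ i ≠ i

/-- `F_n(s,t)` as a polynomial in `t` with coefficients in `ℤ[s]`:
`F_n = ∑_{σ ∈ 𝒟_n} (−1)^{inv σ} s^{exc σ} t^{depth σ}`. -/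
noncomputable def F (n : ℕ) : Polynomial (Polynomial ℤ) :=
  ∑ σ ∈ derangementsFin n,
    Polynomial.C (Polynomial.C ((-1 : ℤ) ^ invN σ) * Polynomial.X ^ excN σ) *
      Polynomial.X ^ depthN σ


-- ===================== auxiliary development =====================
open Equiv Equiv.Perm Polynomial Matrix

noncomputable abbrev PP := Polynomial (Polynomial ℤ)

noncomputable def aE (i j : ℕ) : PP :=
  if i < j then Polynomial.C Polynomial.X * Polynomial.X ^ (j - i) else if i = j then 0 else 1
noncomputable def wE (i j : ℕ) : PP :=
  if i = j + 1 then 1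
  else if j = i + 1 then Polynomial.C Polynomial.X * Polynomial.X
  else if i = j ∧ i ≠ 0 then -(Polynomial.C (1 + Polynomial.X) * Polynomial.X) else 0

lemma aE_lt {i j : ℕ} (h : i < j) :
    aE i j = Polynomial.C Polynomial.X * Polynomial.X ^ (j - i) := if_pos h
lemma aE_self (i : ℕ) : aE i i = 0 := by simp [aE]
lemma aE_gt {i j : ℕ} (h : j < i) : aE i j = 1 := by
  rw [aE, if_neg (by omega), if_neg (by omega)]

lemma hCX : (Polynomial.C (1 + Polynomial.X) : PP) =
    1 + Polynomial.C Polynomial.X := by simp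

theorem keyE (i j : ℕ) :
    aE i j - (if 1 ≤ i then aE (i - 1) j else 0)
      - (if 1 ≤ j then (aE i (j - 1) - (if 1 ≤ i then aE (i - 1) (j - 1) else 0))
            * Polynomial.X else 0)
      = wE i j := by
  have hT : ∀ m : ℕ, (1 ≤ m + 1) = True := fun m => eq_true (by omega)
  have hF : ((1:ℕ) ≤ 0) = False := eq_false (by omega)
  rcases i with _ | i <;> rcases j with _ | j <;>
    simp only [hT, hF, if_true, if_false, Nat.add_sub_cancel, sub_zero]
  · simp [aE, wE]
  · -- i = 0, j = j+1
    rcases j with _ | j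
    · rw [aE_lt (by omega), aE_self, wE, if_neg (by omega), if_pos rfl]
      norm_num
    · rw [aE_lt (by omega), aE_lt (by omega), wE,
        if_neg (by omega), if_neg (by omega), if_neg (by omega)]
      have e1 : j + 2 - 0 = j + 2 := by omega
      have e2 : j + 1 - 0 = j + 1 := by omega
      rw [e1, e2]
      ring
  · -- i = i+1, j = 0
    rcases i with _ | i
    · rw [aE_gt (by omega), aE_self, wE, if_pos rfl]
      ring
    · rw [aE_gt (by omega), aE_gt (by omega), wE,
        if_neg (by omega), if_neg (by omega), if_neg (by omega)]
      ring
  · -- i+1, j+1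
    rcases Nat.lt_trichotomy i j with hij | hij | hij
    · rcases Nat.eq_or_lt_of_le hij with heq | hlt
      · -- j = i + 1
        subst heq
        rw [aE_lt (by omega), aE_lt (by omega), aE_self, aE_lt (by omega), wE,
          if_neg (by omega), if_pos (by omega)]
        have e1 : i + 1 + 1 - (i + 1) = 1 := by omega
        have e2 : i + 1 + 1 - i = 2 := by omega
        have e3 : i + 1 - i = 1 := by omega
        rw [e1, e2, e3]
        ring
      · -- i + 1 < j
        obtain ⟨m, rfl⟩ : ∃ m, j = i + m + 2 := ⟨j - i - 2, by omega⟩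
        rw [aE_lt (by omega), aE_lt (by omega), aE_lt (by omega), aE_lt (by omega), wE,
          if_neg (by omega), if_neg (by omega), if_neg (by omega)]
        have e1 : i + m + 2 + 1 - (i + 1) = m + 2 := by omega
        have e2 : i + m + 2 + 1 - i = m + 3 := by omega
        have e3 : i + m + 2 - (i + 1) = m + 1 := by omega
        have e4 : i + m + 2 - i = m + 2 := by omega
        rw [e1, e2, e3, e4]
        ring
    · subst hij
      rw [aE_self, aE_lt (by omega), aE_gt (by omega), aE_self, wE,
        if_neg (by omega), if_neg (by omega), if_pos (by omega), hCX]
      have e2 : i + 1 - i = 1 := by omega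
      rw [e2]
      ring
    · rcases Nat.eq_or_lt_of_le hij with heq | hlt
      · -- i = j + 1
        subst heq
        rw [aE_gt (by omega), aE_self, aE_gt (by omega), aE_gt (by omega), wE,
          if_pos (by omega)]
        ring
      · obtain ⟨m, rfl⟩ : ∃ m, i = j + m + 2 := ⟨i - j - 2, by omega⟩
        rw [aE_gt (by omega), aE_gt (by omega), aE_gt (by omega), aE_gt (by omega), wE,
          if_neg (by omega), if_neg (by omega), if_neg (by omega)]
        ring


lemma wE_shift (i j : ℕ) : wE (i + 2) (j + 2) = wE (i + 1) (j + 1) := by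
  unfold wE
  simp only [show (i + 2 = j + 2 + 1) ↔ (i + 1 = j + 1 + 1) from by omega,
    show (j + 2 = i + 2 + 1) ↔ (j + 1 = i + 1 + 1) from by omega,
    show (i + 2 = j + 2 ∧ i + 2 ≠ 0) ↔ (i + 1 = j + 1 ∧ i + 1 ≠ 0) from by omega]

noncomputable def Amat (n : ℕ) : Matrix (Fin n) (Fin n) PP :=
  Matrix.of fun i j => aE (i : ℕ) (j : ℕ)
noncomputable def Nmat (n : ℕ) : Matrix (Fin n) (Fin n) PP :=
  Matrix.of fun i j => if (i : ℕ) = (j : ℕ) + 1 then 1 else 0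
noncomputable def Vmat (n : ℕ) : Matrix (Fin n) (Fin n) PP :=
  Matrix.of fun i j => if (j : ℕ) = (i : ℕ) + 1 then Polynomial.X else 0
noncomputable def Wmat (n : ℕ) : Matrix (Fin n) (Fin n) PP :=
  Matrix.of fun i j => wE (i : ℕ) (j : ℕ)
noncomputable def Tmat (n : ℕ) : Matrix (Fin n) (Fin n) PP :=
  Matrix.of fun i j => wE ((i : ℕ) + 1) ((j : ℕ) + 1)

lemma mulN {n : ℕ} (M : Matrix (Fin n) (Fin n) PP) (i j : Fin n) :
    (Nmat n * M) i j =
      if 1 ≤ (i : ℕ) then M ⟨(i : ℕ) - 1, lt_of_le_of_lt (Nat.sub_le _ _) i.2⟩ j else 0 := by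
  rw [Matrix.mul_apply]
  split_ifs with h
  · rw [Finset.sum_eq_single (⟨(i : ℕ) - 1, lt_of_le_of_lt (Nat.sub_le _ _) i.2⟩ : Fin n)]
    · simp only [Nmat, Matrix.of_apply]
      rw [if_pos (by omega : (i : ℕ) = (i : ℕ) - 1 + 1), one_mul]
    · intro k _ hk
      have : ¬ (i : ℕ) = (k : ℕ) + 1 := by
        intro hc
        exact hk (Fin.ext (show (k : ℕ) = (i : ℕ) - 1 by omega))
      simp [Nmat, this]
    · intro h'; exact absurd (Finset.mem_univ _) h'
  · apply Finset.sum_eq_zero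
    intro k _
    have : ¬ (i : ℕ) = (k : ℕ) + 1 := by omega
    simp [Nmat, this]

lemma mulV {n : ℕ} (M : Matrix (Fin n) (Fin n) PP) (i j : Fin n) :
    (M * Vmat n) i j =
      if 1 ≤ (j : ℕ) then M i ⟨(j : ℕ) - 1, lt_of_le_of_lt (Nat.sub_le _ _) j.2⟩ * Polynomial.X
      else 0 := by
  rw [Matrix.mul_apply]
  split_ifs with h
  · rw [Finset.sum_eq_single (⟨(j : ℕ) - 1, lt_of_le_of_lt (Nat.sub_le _ _) j.2⟩ : Fin n)]
    · simp only [Vmat, Matrix.of_apply]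
      rw [if_pos (by omega : (j : ℕ) = (j : ℕ) - 1 + 1)]
    · intro k _ hk
      have : ¬ (j : ℕ) = (k : ℕ) + 1 := by
        intro hc
        exact hk (Fin.ext (show (k : ℕ) = (j : ℕ) - 1 by omega))
      simp [Vmat, this]
    · intro h'; exact absurd (Finset.mem_univ _) h'
  · apply Finset.sum_eq_zero
    intro k _
    have : ¬ (j : ℕ) = (k : ℕ) + 1 := by omega
    simp [Vmat, this]

theorem NAV (n : ℕ) : (1 - Nmat n) * Amat n * (1 - Vmat n) = Wmat n := by
  have h1 : (1 - Nmat n) * Amat n = Amat n - Nmat n * Amat n := by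
    rw [Matrix.sub_mul, Matrix.one_mul]
  rw [h1, Matrix.mul_sub, Matrix.mul_one]
  apply Matrix.ext
  intro i j
  rw [Matrix.sub_apply, Matrix.sub_apply, mulN, mulV, Matrix.sub_apply, mulN]
  simp only [Amat, Wmat, Matrix.of_apply]
  exact keyE (i : ℕ) (j : ℕ)

lemma det1N (n : ℕ) : (1 - Nmat n).det = 1 := by
  rw [Matrix.det_of_lowerTriangular]
  · apply Finset.prod_eq_one
    intro i _
    simp [Nmat, Matrix.sub_apply, Matrix.one_apply]
  · intro i j hij
    have hij' : i < j := hij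
    have h1 : i ≠ j := ne_of_lt hij'
    have h2 : ¬ (i : ℕ) = (j : ℕ) + 1 := by
      have := Fin.lt_iff_val_lt_val.mp hij'
      omega
    simp [Nmat, Matrix.sub_apply, Matrix.one_apply, h1, h2]

lemma det1V (n : ℕ) : (1 - Vmat n).det = 1 := by
  rw [Matrix.det_of_upperTriangular]
  · apply Finset.prod_eq_one
    intro i _
    simp [Vmat, Matrix.sub_apply, Matrix.one_apply]
  · intro i j hij
    have hij' : j < i := hij
    have h1 : i ≠ j := ne_of_gt hij'
    have h2 : ¬ (j : ℕ) = (i : ℕ) + 1 := by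
      have := Fin.lt_iff_val_lt_val.mp hij'
      omega
    simp [Vmat, Matrix.sub_apply, Matrix.one_apply, h1, h2]

theorem detAW (n : ℕ) : (Amat n).det = (Wmat n).det := by
  have := congrArg Matrix.det (NAV n)
  rwa [Matrix.det_mul, Matrix.det_mul, det1N, det1V, one_mul, mul_one] at this

lemma wE_eq_one {i j : ℕ} (h : i = j + 1) : wE i j = 1 := by rw [wE, if_pos h]
lemma wE_eq_c {i j : ℕ} (h1 : ¬ i = j + 1) (h2 : j = i + 1) : wE i j = C X * X := by
  rw [wE, if_neg h1, if_pos h2]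
lemma wE_eq_d {i : ℕ} (h : i ≠ 0) : wE i i = -(C (1 + X) * X) := by
  rw [wE, if_neg (by omega), if_neg (by omega), if_pos ⟨rfl, h⟩]
lemma wE_eq_zero {i j : ℕ} (h1 : ¬ i = j + 1) (h2 : ¬ j = i + 1) (h3 : ¬ (i = j ∧ i ≠ 0)) :
    wE i j = 0 := by
  rw [wE, if_neg h1, if_neg h2, if_neg h3]

lemma succAbove_one_succ {n : ℕ} (j : Fin n) :
    ((Fin.succ (0 : Fin (n + 1))).succAbove (Fin.succ j) : ℕ) = (j : ℕ) + 2 := by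
  rw [Fin.succAbove]
  rw [if_neg (by simp [Fin.lt_def])]
  simp

lemma succAbove_one_zero {n : ℕ} :
    ((Fin.succ (0 : Fin (n + 1))).succAbove (0 : Fin (n + 1)) : ℕ) = 0 := by
  rw [Fin.succAbove]
  rw [if_pos (by simp [Fin.lt_def])]
  simp

lemma subW (n : ℕ) :
    (((Wmat (n + 2)).submatrix Fin.succ (Fin.succ (0 : Fin (n + 1))).succAbove).submatrix
        (0 : Fin (n + 1)).succAbove Fin.succ) = Tmat n := by
  apply Matrix.ext
  intro i j
  simp only [Matrix.submatrix_apply, Wmat, Tmat, Matrix.of_apply, Fin.succAbove_zero]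
  rw [show ((Fin.succ (Fin.succ i) : Fin (n + 2)) : ℕ) = (i : ℕ) + 2 by simp,
    show (((Fin.succ (0 : Fin (n + 1))).succAbove (Fin.succ j)) : ℕ) = (j : ℕ) + 2 from
      succAbove_one_succ j]
  exact wE_shift (i : ℕ) (j : ℕ)

lemma subT (n : ℕ) : (Tmat (n + 2)).submatrix Fin.succ Fin.succ = Tmat (n + 1) := by
  apply Matrix.ext
  intro i j
  simp only [Matrix.submatrix_apply, Tmat, Matrix.of_apply, Fin.val_succ]
  exact wE_shift (i : ℕ) (j : ℕ)

lemma subT2 (n : ℕ) :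
    (((Tmat (n + 2)).submatrix Fin.succ (Fin.succ (0 : Fin (n + 1))).succAbove).submatrix
        (0 : Fin (n + 1)).succAbove Fin.succ) = Tmat n := by
  apply Matrix.ext
  intro i j
  simp only [Matrix.submatrix_apply, Tmat, Matrix.of_apply, Fin.succAbove_zero]
  rw [show ((Fin.succ (Fin.succ i) : Fin (n + 2)) : ℕ) = (i : ℕ) + 2 by simp,
    succAbove_one_succ j]
  have h1 : wE ((i : ℕ) + 2 + 1) ((j : ℕ) + 2 + 1) = wE ((i : ℕ) + 1 + 1) ((j : ℕ) + 1 + 1) :=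
    wE_shift ((i : ℕ) + 1) ((j : ℕ) + 1)
  rw [h1]
  exact wE_shift (i : ℕ) (j : ℕ)

theorem detW_succ (n : ℕ) : (Wmat (n + 2)).det = -((Polynomial.C Polynomial.X * Polynomial.X : PP)) * (Tmat n).det := by
  have hB : ((Wmat (n + 2)).submatrix Fin.succ (Fin.succ (0 : Fin (n + 1))).succAbove).det
      = (Tmat n).det := by
    rw [Matrix.det_succ_column_zero, Fin.sum_univ_succ]
    have h00 : (Wmat (n + 2)).submatrix Fin.succ (Fin.succ (0 : Fin (n + 1))).succAbove 0 0
        = 1 := by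
      simp only [Matrix.submatrix_apply, Wmat, Matrix.of_apply]
      rw [show ((Fin.succ (0 : Fin (n + 1)) : Fin (n + 2)) : ℕ) = 1 by simp]
      rw [show (((Fin.succ (0 : Fin (n + 1))).succAbove (0 : Fin (n + 1))) : ℕ) = 0 from
        succAbove_one_zero]
      exact wE_eq_one rfl
    have htail : ∀ i : Fin n,
        (Wmat (n + 2)).submatrix Fin.succ (Fin.succ (0 : Fin (n + 1))).succAbove (Fin.succ i) 0
          = 0 := by
      intro i
      simp only [Matrix.submatrix_apply, Wmat, Matrix.of_apply]
      rw [show ((Fin.succ (Fin.succ i) : Fin (n + 2)) : ℕ) = (i : ℕ) + 2 by simp]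
      rw [show (((Fin.succ (0 : Fin (n + 1))).succAbove (0 : Fin (n + 1))) : ℕ) = 0 from
        succAbove_one_zero]
      exact wE_eq_zero (by omega) (by omega) (by omega)
    rw [h00, subW]
    rw [Finset.sum_eq_zero (fun i _ => by rw [htail i, mul_zero, zero_mul])]
    simp
  rw [Matrix.det_succ_row_zero, Fin.sum_univ_succ, Fin.sum_univ_succ]
  have h00 : Wmat (n + 2) 0 0 = 0 := by
    simp only [Wmat, Matrix.of_apply, Fin.val_zero]
    exact wE_eq_zero (by omega) (by omega) (by omega)
  have h01 : Wmat (n + 2) 0 (Fin.succ 0) = C X * X := by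
    simp only [Wmat, Matrix.of_apply]
    rw [show ((Fin.succ (0 : Fin (n + 1)) : Fin (n + 2)) : ℕ) = 1 by simp,
      show ((0 : Fin (n + 2)) : ℕ) = 0 by simp]
    exact wE_eq_c (by omega) (by omega)
  have htail : ∀ j : Fin n, Wmat (n + 2) 0 (Fin.succ (Fin.succ j)) = 0 := by
    intro j
    simp only [Wmat, Matrix.of_apply]
    rw [show ((Fin.succ (Fin.succ j) : Fin (n + 2)) : ℕ) = (j : ℕ) + 2 by simp,
      show ((0 : Fin (n + 2)) : ℕ) = 0 by simp]
    exact wE_eq_zero (by omega) (by omega) (by omega)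
  rw [h00, h01, hB]
  rw [Finset.sum_eq_zero (fun j _ => by rw [htail j, mul_zero, zero_mul])]
  simp only [Fin.val_zero, pow_zero, one_mul, mul_zero, zero_mul, add_zero, zero_add,
    Fin.val_succ, pow_one]
  ring

theorem detT_rec (n : ℕ) : (Tmat (n + 2)).det
    = -((Polynomial.C (1 + Polynomial.X) * Polynomial.X : PP)) * (Tmat (n + 1)).det
      - (Polynomial.C Polynomial.X * Polynomial.X : PP) * (Tmat n).det := by
  have hB : ((Tmat (n + 2)).submatrix Fin.succ (Fin.succ (0 : Fin (n + 1))).succAbove).det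
      = (Tmat n).det := by
    rw [Matrix.det_succ_column_zero, Fin.sum_univ_succ]
    have h00 : (Tmat (n + 2)).submatrix Fin.succ (Fin.succ (0 : Fin (n + 1))).succAbove 0 0
        = 1 := by
      simp only [Matrix.submatrix_apply, Tmat, Matrix.of_apply]
      rw [show ((Fin.succ (0 : Fin (n + 1)) : Fin (n + 2)) : ℕ) = 1 by simp]
      rw [show (((Fin.succ (0 : Fin (n + 1))).succAbove (0 : Fin (n + 1))) : ℕ) = 0 from
        succAbove_one_zero]
      exact wE_eq_one rfl
    have htail : ∀ i : Fin n,
        (Tmat (n + 2)).submatrix Fin.succ (Fin.succ (0 : Fin (n + 1))).succAbove (Fin.succ i) 0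
          = 0 := by
      intro i
      simp only [Matrix.submatrix_apply, Tmat, Matrix.of_apply]
      rw [show ((Fin.succ (Fin.succ i) : Fin (n + 2)) : ℕ) = (i : ℕ) + 2 by simp]
      rw [show (((Fin.succ (0 : Fin (n + 1))).succAbove (0 : Fin (n + 1))) : ℕ) = 0 from
        succAbove_one_zero]
      exact wE_eq_zero (by omega) (by omega) (by omega)
    rw [h00, subT2]
    rw [Finset.sum_eq_zero (fun i _ => by rw [htail i, mul_zero, zero_mul])]
    simp
  rw [Matrix.det_succ_row_zero, Fin.sum_univ_succ, Fin.sum_univ_succ]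
  have h00 : Tmat (n + 2) 0 0 = -((Polynomial.C (1 + Polynomial.X) * Polynomial.X : PP)) := by
    simp only [Tmat, Matrix.of_apply, Fin.val_zero]
    exact wE_eq_d (by omega)
  have h01 : Tmat (n + 2) 0 (Fin.succ 0) = Polynomial.C Polynomial.X * Polynomial.X := by
    simp only [Tmat, Matrix.of_apply, Fin.val_zero]
    rw [show ((Fin.succ (0 : Fin (n + 1)) : Fin (n + 2)) : ℕ) = 1 by simp]
    exact wE_eq_c (by omega) (by omega)
  have htail : ∀ j : Fin n, Tmat (n + 2) 0 (Fin.succ (Fin.succ j)) = 0 := by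
    intro j
    simp only [Tmat, Matrix.of_apply, Fin.val_zero]
    rw [show ((Fin.succ (Fin.succ j) : Fin (n + 2)) : ℕ) = (j : ℕ) + 2 by simp]
    exact wE_eq_zero (by omega) (by omega) (by omega)
  rw [h00, h01, hB]
  rw [show (0 : Fin (n + 2)).succAbove = Fin.succ from Fin.succAbove_zero, subT]
  rw [Finset.sum_eq_zero (fun j _ => by rw [htail j, mul_zero, zero_mul])]
  simp only [Fin.val_zero, pow_zero, one_mul, mul_zero, zero_mul, add_zero, zero_add,
    Fin.val_succ, pow_one]
  ring

lemma detT0 : (Tmat 0).det = 1 := Matrix.det_fin_zero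
lemma detT1 : (Tmat 1).det = -((Polynomial.C (1 + Polynomial.X) * Polynomial.X : PP)) := by
  rw [Matrix.det_fin_one]
  simp only [Tmat, Matrix.of_apply, Fin.val_zero]
  exact wE_eq_d (by omega)
lemma detW0 : (Wmat 0).det = 1 := Matrix.det_fin_zero
lemma detW1 : (Wmat 1).det = 0 := by
  rw [Matrix.det_fin_one]
  simp only [Wmat, Matrix.of_apply, Fin.val_zero]
  exact wE_eq_zero (by omega) (by omega) (by omega)


theorem sign_eq_signAux {n : ℕ} (σ : Perm (Fin n)) : Perm.sign σ = Perm.signAux σ := by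
  refine Equiv.Perm.swap_induction_on σ ?_ ?_
  · simp [Equiv.Perm.signAux_one]
  · intro f x y hxy ih
    rw [Equiv.Perm.signAux_mul, Equiv.Perm.signAux_swap hxy, _root_.map_mul,
      Equiv.Perm.sign_swap hxy, ih]

theorem signAux_eq_pow_invN {n : ℕ} (σ : Perm (Fin n)) :
    Perm.signAux σ = (-1) ^ invN σ := by
  unfold Equiv.Perm.signAux
  rw [Finset.prod_ite (fun _ => (-1 : ℤˣ)) (fun _ => (1 : ℤˣ)), Finset.prod_const,
    Finset.prod_const, one_pow, mul_one]
  congr 1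
  rw [invN]
  apply Finset.card_nbij (fun a => (a.2, a.1))
  · rintro ⟨a1, a2⟩ ha
    simp only [Finset.mem_coe, Finset.mem_filter, Equiv.Perm.mem_finPairsLT] at ha ⊢
    refine ⟨Finset.mem_univ _, ha.1, lt_of_le_of_ne ha.2 ?_⟩
    exact fun h => absurd (σ.injective h) (ne_of_gt ha.1)
  · rintro ⟨a1, a2⟩ - ⟨b1, b2⟩ - h
    simp only [Prod.mk.injEq] at h
    simp [h.1, h.2]
  · rintro ⟨p1, p2⟩ hp
    simp only [Finset.coe_filter, Set.mem_setOf_eq, Finset.mem_univ, true_and] at hp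
    refine ⟨⟨p2, p1⟩, ?_, rfl⟩
    simp only [Finset.coe_filter, Equiv.Perm.mem_finPairsLT, Set.mem_setOf_eq]
    exact ⟨hp.1, le_of_lt hp.2⟩

theorem sign_eq_pow_invN {n : ℕ} (σ : Perm (Fin n)) :
    (Perm.sign σ : ℤ) = (-1) ^ invN σ := by
  rw [sign_eq_signAux, signAux_eq_pow_invN]
  simp

theorem F_eq_det (n : ℕ) : F n = ((Amat n)ᵀ).det := by
  rw [Matrix.det_apply]
  rw [show (Finset.univ : Finset (Perm (Fin n)))
      = derangementsFin n ∪ (Finset.univ \ derangementsFin n) by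
    rw [Finset.union_sdiff_of_subset (Finset.subset_univ _)]]
  rw [Finset.sum_union (Finset.disjoint_sdiff)]
  have h0 : ∑ σ ∈ Finset.univ \ derangementsFin n,
      Perm.sign σ • ∏ i, (Amat n)ᵀ (σ i) i = 0 := by
    apply Finset.sum_eq_zero
    intro σ hσ
    simp only [Finset.mem_sdiff, Finset.mem_univ, true_and, derangementsFin,
      Finset.mem_filter, not_and, not_forall] at hσ
    obtain ⟨i, hi⟩ := hσ
    simp only [not_not] at hi
    have hz : (Amat n)ᵀ (σ i) i = 0 := by
      rw [hi]; exact aE_self _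
    have : ∏ j : Fin n, (Amat n)ᵀ (σ j) j = 0 :=
      Finset.prod_eq_zero (Finset.mem_univ i) hz
    rw [this, smul_zero]
  rw [h0, add_zero, F]
  apply Finset.sum_congr rfl
  intro σ hσ
  have hder : ∀ i, σ i ≠ i := by
    simpa [derangementsFin] using hσ
  have hprod : ∏ i, (Amat n)ᵀ (σ i) i
      = Polynomial.C ((Polynomial.X : Polynomial ℤ) ^ excN σ) * Polynomial.X ^ depthN σ := by
    have := (Finset.prod_filter_mul_prod_filter_not Finset.univ
      (fun i : Fin n => i < σ i) (fun i => (Amat n)ᵀ (σ i) i)).symm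
    rw [this]
    have h1 : ∀ i ∈ Finset.univ.filter (fun i : Fin n => i < σ i),
        (Amat n)ᵀ (σ i) i = Polynomial.C Polynomial.X * Polynomial.X ^ ((σ i : ℕ) - (i : ℕ)) := by
      intro i hi
      simp only [Finset.mem_filter] at hi
      have hlt : (i : ℕ) < (σ i : ℕ) := hi.2
      exact aE_lt hlt
    have h2 : ∀ i ∈ Finset.univ.filter (fun i : Fin n => ¬ i < σ i),
        (Amat n)ᵀ (σ i) i = 1 := by
      intro i hi
      simp only [Finset.mem_filter] at hi
      have hne : σ i ≠ i := hder i
      have hnlt : ¬ ((i : ℕ) < (σ i : ℕ)) := hi.2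
      have h3 : ¬ ((i : ℕ) = ((σ i) : ℕ)) := fun h => hne (Fin.ext h.symm)
      exact aE_gt (by omega)
    rw [Finset.prod_congr rfl h1, Finset.prod_congr rfl h2, Finset.prod_const_one, mul_one,
      Finset.prod_mul_distrib, Finset.prod_const, Finset.prod_pow_eq_pow_sum]
    rw [excN, depthN, _root_.map_pow]
  rw [hprod]
  rw [Units.smul_def, zsmul_eq_mul, sign_eq_pow_invN]
  have hc : (((-1 : ℤ) ^ invN σ : ℤ) : PP) = Polynomial.C (Polynomial.C ((-1 : ℤ) ^ invN σ)) :=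
    (map_intCast ((Polynomial.C.comp Polynomial.C) : ℤ →+* PP) _).symm
  rw [hc]
  simp only [_root_.map_mul]
  ring

theorem F_eq_detW (n : ℕ) : F n = (Wmat n).det := by
  rw [F_eq_det, Matrix.det_transpose, detAW]

noncomputable def rhs (n k : ℕ) : Polynomial ℤ :=
  if k + 1 ≤ n ∧ n ≤ 2 * k then
    Polynomial.C ((-1 : ℤ) ^ k * (Nat.choose (k - 1) (n - k - 1) : ℤ)) *
      Polynomial.X ^ (n - k) * (1 + Polynomial.X) ^ (2 * k - n)
  else 0



theorem step (m j : ℕ) (hj : 1 ≤ j) :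
    rhs (m + 2) (j + 1)
      = -(1 + Polynomial.X) * rhs (m + 1) j - Polynomial.X * rhs m j := by
  by_cases hcond : j ≤ m ∧ m ≤ 2 * j
  · obtain ⟨a, rfl⟩ : ∃ a, m = j + a := ⟨m - j, by omega⟩
    have ha : a ≤ j := by omega
    rcases Nat.eq_zero_or_pos a with rfl | hapos
    · -- a = 0 : m = j, only first source
      rw [rhs, if_pos (by omega), rhs, if_pos (by omega), rhs, if_neg (by omega)]
      have e1 : j + 0 + 2 - (j + 1) - 1 = 0 := by omega
      have e2 : j + 0 + 2 - (j + 1) = 1 := by omega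
      have e3 : 2 * (j + 1) - (j + 0 + 2) = j := by omega
      have e4 : j + 1 - j - 1 = 0 := by omega
      have e5 : j + 0 + 1 - j = 1 := by omega
      have e6 : 2 * j - (j + 0 + 1) = j - 1 := by omega
      rw [e1, e2, e3, e4, e5, e6]
      have e7 : (1 + Polynomial.X : Polynomial ℤ) ^ j
          = (1 + Polynomial.X) ^ (j - 1) * (1 + Polynomial.X) := by
        rw [← pow_succ]; congr 1; omega
      rw [e7]
      simp only [Nat.add_sub_cancel, Nat.choose_zero_right, Nat.cast_one, mul_one,
        _root_.map_mul, _root_.map_pow, _root_.map_neg, _root_.map_one]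
      ring
    · rcases Nat.eq_or_lt_of_le ha with rfl | hlt
      · -- a = j : m = 2j, only second source
        rw [rhs, if_pos (by omega), rhs, if_neg (by omega), rhs, if_pos (by omega)]
        simp only [Nat.add_sub_cancel]
        have e1 : a + a + 2 - (a + 1) - 1 = a := by omega
        have e2 : a + a + 2 - (a + 1) = a + 1 := by omega
        have e3 : 2 * (a + 1) - (a + a + 2) = 0 := by omega
        have e4 : a + a - a - 1 = a - 1 := by omega
        have e5 : a + a - a = a := by omega
        have e6 : 2 * a - (a + a) = 0 := by omega
        rw [e1, e2, e3, e6]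
        have hc : Nat.choose a a = Nat.choose (a - 1) (a - 1) := by
          rw [Nat.choose_self, Nat.choose_self]
        rw [hc]
        have e7 : (Polynomial.X : Polynomial ℤ) ^ (a + 1)
            = Polynomial.X ^ a * Polynomial.X := by rw [pow_succ]
        rw [e7]
        simp only [_root_.map_mul, _root_.map_pow, _root_.map_neg, _root_.map_one]
        ring
      · -- 1 ≤ a < j : both sources, Pascal
        rw [rhs, if_pos (by omega), rhs, if_pos (by omega), rhs, if_pos (by omega)]
        simp only [Nat.add_sub_cancel]
        have e1 : j + a + 2 - (j + 1) - 1 = a := by omega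
        have e2 : j + a + 2 - (j + 1) = a + 1 := by omega
        have e3 : 2 * (j + 1) - (j + a + 2) = j - a := by omega
        have e4 : j + a + 1 - j - 1 = a := by omega
        have e5 : j + a + 1 - j = a + 1 := by omega
        have e6 : 2 * j - (j + a + 1) = j - a - 1 := by omega
        have e7 : j + a - j - 1 = a - 1 := by omega
        have e8 : j + a - j = a := by omega
        have e9 : 2 * j - (j + a) = j - a := by omega
        rw [e1, e2, e3, e4, e5, e6, e7, e8, e9]
        have hc : Nat.choose j a = Nat.choose (j - 1) (a - 1) + Nat.choose (j - 1) a := by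
          have hp := Nat.choose_succ_succ (j - 1) (a - 1)
          simp only [Nat.succ_eq_add_one] at hp
          rw [show j - 1 + 1 = j by omega, show a - 1 + 1 = a by omega] at hp
          exact hp
        rw [hc]
        have e10 : (1 + Polynomial.X : Polynomial ℤ) ^ (j - a)
            = (1 + Polynomial.X) ^ (j - a - 1) * (1 + Polynomial.X) := by
          rw [← pow_succ]; congr 1; omega
        have e11 : (Polynomial.X : Polynomial ℤ) ^ (a + 1)
            = Polynomial.X ^ a * Polynomial.X := by rw [pow_succ]
        rw [e10, e11]
        push_cast
        simp only [_root_.map_mul, _root_.map_pow, _root_.map_neg, _root_.map_one, _root_.map_add]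
        ring
  · rw [rhs, if_neg (by omega), rhs, if_neg (by omega), rhs, if_neg (by omega)]
    ring



noncomputable def dd : PP := -(Polynomial.C ((1 : Polynomial ℤ) + Polynomial.X) * Polynomial.X)
noncomputable def cc : PP := Polynomial.C (Polynomial.X : Polynomial ℤ) * Polynomial.X

variable (F' : ℕ → PP)
  (hF0 : F' 0 = 1) (hF1 : F' 1 = 0)
  (hFrec : ∀ n, F' (n + 2) = dd * F' (n + 1) - cc * F' n)



theorem F_zero : F 0 = 1 := by rw [F_eq_detW, detW0]
theorem F_one : F 1 = 0 := by rw [F_eq_detW, detW1]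

theorem F_rec : ∀ n, F (n + 2) = dd * F (n + 1) - cc * F n := by
  intro n
  match n with
  | 0 =>
    rw [F_eq_detW 2, F_eq_detW 1, F_eq_detW 0, detW_succ 0, detT0, detW1, detW0, dd, cc]
    ring
  | 1 =>
    rw [F_eq_detW 3, F_eq_detW 2, F_eq_detW 1,
      show (3 : ℕ) = 1 + 2 by rfl, detW_succ 1, detT1, detW_succ 0, detT0, detW1, dd, cc]
    ring
  | (m + 2) =>
    rw [F_eq_detW (m + 4), F_eq_detW (m + 3), F_eq_detW (m + 2),
      show m + 4 = (m + 2) + 2 by rfl, detW_succ (m + 2), detT_rec m,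
      show m + 3 = (m + 1) + 2 by rfl, detW_succ (m + 1), detW_succ m, dd, cc]
    ring

theorem main : ∀ n k, (F n).coeff k = if n = 0 ∧ k = 0 then 1 else rhs n k := by
  intro n
  induction n using Nat.strong_induction_on with
  | _ n ih =>
    match n with
    | 0 =>
      intro k
      rw [F_zero]
      rcases k with _ | k
      · rw [if_pos ⟨rfl, rfl⟩]
        simp
      · rw [if_neg (by omega), rhs, if_neg (by omega)]
        simp [Polynomial.coeff_one]
    | 1 =>
      intro k
      rw [F_one, if_neg (by omega), rhs, if_neg (by omega)]
      exact Polynomial.coeff_zero k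
    | (m + 2) =>
      intro k
      have hrw : F (m + 2) = (Polynomial.C (-((1 : Polynomial ℤ) + Polynomial.X)) * F (m + 1)
          - Polynomial.C (Polynomial.X : Polynomial ℤ) * F m) * Polynomial.X := by
        rw [F_rec m, dd, cc, _root_.map_neg]
        ring
      rw [hrw]
      rcases k with _ | k
      · rw [Polynomial.mul_coeff_zero]
        rw [if_neg (by omega), rhs, if_neg (by omega)]
        simp
      · rw [Polynomial.coeff_mul_X, Polynomial.coeff_sub, Polynomial.coeff_C_mul,
          Polynomial.coeff_C_mul, ih (m + 1) (by omega) k, ih m (by omega) k,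
          if_neg (by omega : ¬ (m + 2 = 0 ∧ k + 1 = 0))]
        rcases k with _ | j
        · -- k = 0
          rw [if_neg (by omega), rhs, if_neg (by omega)]
          rcases Nat.eq_zero_or_pos m with rfl | hm
          · rw [if_pos ⟨rfl, rfl⟩, rhs, if_pos (by omega)]
            norm_num
          · rw [if_neg (by omega), rhs, if_neg (by omega), rhs, if_neg (by omega)]
            ring
        · rw [if_neg (by omega), if_neg (by omega)]
          exact (step m (j + 1) (by omega)).symm

/-- The coefficient of `t^k` in `F_n(s,t)` is
`(−1)^k C(k−1, n−k−1) s^{n−k} (1+s)^{2k−n}` for `k+1 ≤ n ≤ 2k`, and `0` otherwise. -/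
theorem F_coeff (n k : ℕ) (hn : 1 ≤ n) (hk : 1 ≤ k) :
    (F n).coeff k =
      if k + 1 ≤ n ∧ n ≤ 2 * k then
        Polynomial.C ((-1 : ℤ) ^ k * (Nat.choose (k - 1) (n - k - 1) : ℤ)) *
          Polynomial.X ^ (n - k) * (1 + Polynomial.X) ^ (2 * k - n)
      else 0 := by
  have h := main n k
  rw [h, if_neg (by omega), rhs]
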